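/- Let G be a finite group, p a prime, S ∈ Syl_p(G), and let P, Q ≤ S be G-conjugate subgroups with N_S(P) ∈ Syl_p(N_G(P)). Then there exists g ∈ G such that gQg⁻¹ = P and g·N_S(Q)·g⁻¹ ≤ N_S(P). -/

import Mathlib

/-- The conjugate subgroup `g P g⁻¹`. -/
def conjBy {G : Type*} [Group G] (g : G) (P : Subgroup G) : Subgroup G :=
  P.map (MulAut.conj g).toMonoidHom

lemma mem_conjBy {G : Type*} [Group G] {g y : G} {P : Subgroup G} :
    y ∈ conjBy g P ↔ ∃ k ∈ P, g * k * g⁻¹ = y := by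
  simp [conjBy, Subgroup.mem_map, MulAut.conj_apply]

lemma conjBy_conjBy {G : Type*} [Group G] (g h : G) (P : Subgroup G) :
    conjBy g (conjBy h P) = conjBy (g * h) P := by
  ext y
  simp only [mem_conjBy]
  constructor
  · rintro ⟨k, ⟨m, hm, rfl⟩, rfl⟩
    exact ⟨m, hm, by group⟩
  · rintro ⟨m, hm, rfl⟩
    exact ⟨h * m * h⁻¹, ⟨m, hm, rfl⟩, by group⟩

lemma conjBy_inv_conjBy {G : Type*} [Group G] (g : G) (P : Subgroup G) :
    conjBy g⁻¹ (conjBy g P) = P := by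
  rw [conjBy_conjBy, inv_mul_cancel]
  ext y; simp [mem_conjBy]

lemma conjBy_normalizer {G : Type*} [Group G] (g : G) (P : Subgroup G) :
    conjBy g (Subgroup.normalizer (P : Set G)) = Subgroup.normalizer ((conjBy g P : Subgroup G) : Set G) :=
  Subgroup.map_equiv_normalizer_eq P (MulAut.conj g)

/-- If `P, Q ≤ S ∈ Syl_p(G)` are `G`-conjugate and `N_S(P) ∈ Syl_p(N_G(P))`, then there is
`g ∈ G` with `gQg⁻¹ = P` and `g N_S(Q) g⁻¹ ≤ N_S(P)`. -/
theorem stmt13 {p : ℕ} (hp : p.Prime) {G : Type*} [Group G] [Finite G]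
    (S : Sylow p G) (P Q : Subgroup G) (hP : P ≤ S) (hQ : Q ≤ S)
    (hconj : ∃ h : G, conjBy h P = Q)
    (hFN : ∃ T : Sylow p ↥(Subgroup.normalizer (P : Set G)),
      (T : Subgroup ↥(Subgroup.normalizer (P : Set G)))
        = ((S : Subgroup G) ⊓ (Subgroup.normalizer (P : Set G))).subgroupOf (Subgroup.normalizer (P : Set G))) :
    ∃ g : G, conjBy g Q = P ∧
      conjBy g ((S : Subgroup G) ⊓ (Subgroup.normalizer (Q : Set G))) ≤ (S : Subgroup G) ⊓ (Subgroup.normalizer (P : Set G)) := by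
  haveI := Fact.mk hp
  obtain ⟨h, rfl⟩ := hconj
  obtain ⟨T, hT⟩ := hFN
  -- K = h⁻¹ N_S(Q) h
  set K := conjBy h⁻¹ ((S : Subgroup G) ⊓ Subgroup.normalizer ((conjBy h P : Subgroup G) : Set G)) with hK
  have hKN : K ≤ Subgroup.normalizer (P : Set G) := by
    have : K ≤ conjBy h⁻¹ (Subgroup.normalizer ((conjBy h P : Subgroup G) : Set G)) := by
      intro y hy
      obtain ⟨k, hk, rfl⟩ := mem_conjBy.mp hy
      exact mem_conjBy.mpr ⟨k, hk.2, rfl⟩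
    rw [conjBy_normalizer, conjBy_inv_conjBy] at this
    exact this
  have hKp : IsPGroup p K := by
    have hSp : IsPGroup p (conjBy h⁻¹ (S : Subgroup G)) := S.isPGroup'.map _
    refine hSp.to_le ?_
    intro y hy
    obtain ⟨k, hk, rfl⟩ := mem_conjBy.mp hy
    exact mem_conjBy.mpr ⟨k, hk.1, rfl⟩
  -- K inside N_G(P) as a p-subgroup
  have hKNp : IsPGroup p (K.subgroupOf (Subgroup.normalizer (P : Set G))) :=
    hKp.comap_of_injective (Subgroup.normalizer (P : Set G)).subtype Subtype.coe_injective
  obtain ⟨T', hT'⟩ := hKNp.exists_le_sylow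
  obtain ⟨x, hx⟩ := MulAction.exists_smul_eq (↥(Subgroup.normalizer (P : Set G))) T' T
  refine ⟨(x : G) * h⁻¹, ?_, ?_⟩
  · rw [← conjBy_conjBy, conjBy_inv_conjBy]
    -- x ∈ N_G(P), so conjBy x P = P
    ext t
    simp only [mem_conjBy]
    have hxn := x.2
    rw [Subgroup.mem_normalizer_iff] at hxn
    constructor
    · rintro ⟨m, hm, rfl⟩
      exact (hxn m).mp hm
    · intro ht
      refine ⟨(x : G)⁻¹ * t * x, ?_, by group⟩
      exact (hxn ((x : G)⁻¹ * t * x)).mpr (by simpa [mul_assoc] using ht)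
  · rw [← conjBy_conjBy]
    intro y hy
    obtain ⟨k, hk, rfl⟩ := mem_conjBy.mp hy
    have hkN : k ∈ Subgroup.normalizer (P : Set G) := hKN hk
    have hkT' : (⟨k, hkN⟩ : ↥(Subgroup.normalizer (P : Set G))) ∈ (T' : Subgroup ↥(Subgroup.normalizer (P : Set G))) :=
      hT' (by simpa [Subgroup.mem_subgroupOf])
    have hmem : x * (⟨k, hkN⟩ : ↥(Subgroup.normalizer (P : Set G))) * x⁻¹ ∈ (T : Subgroup ↥(Subgroup.normalizer (P : Set G))) := by
      rw [← hx, Sylow.smul_def, Sylow.pointwise_smul_def]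
      have := Subgroup.smul_mem_pointwise_smul _ (MulAut.conj x)
        (T' : Subgroup ↥(Subgroup.normalizer (P : Set G))) hkT'
      simpa [MulAut.conj_apply] using this
    rw [hT, Subgroup.mem_subgroupOf] at hmem
    simpa using hmem
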